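/- Let p be prime, n ≥ 1, e with 1 ≤ e ≤ n, and let Φ_1, ..., Φ_n be integers with Φ_j = 0 for j ≤ n - e and gcd(Φ_j, p) = 1 for j > n - e. Then as k ranges over 0, ..., p^n - 1 with p-adic digits a_j^{(k)} (so k = Σ_j a_j^{(k)} p^{j-1}), the integers Σ_{j=1}^{n} a_j^{(k)} Φ_j p^{n-j} run through a complete residue system modulo p^e, each residue occurring exactly p^{n-e} times. -/

import Mathlib

open Finset

lemma digit_mod_pow (p i e m : ℕ) (hi : i < e) :
    (m % p ^ e) / p ^ i % p = m / p ^ i % p := by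
  have hdvd : p ^ i * p ∣ p ^ e := by rw [← pow_succ]; exact pow_dvd_pow p hi
  rw [← Nat.mod_mul_right_div_self, ← Nat.mod_mul_right_div_self,
    Nat.mod_mod_of_dvd _ hdvd]

lemma key (p : ℕ) (hp : p.Prime) :
    ∀ (e : ℕ) (u : ℕ → ℤ), (∀ i, i < e → IsCoprime (u i) (p : ℤ)) →
    ∀ m m', m < p ^ e → m' < p ^ e →
    ((p : ℤ) ^ e ∣ (∑ i ∈ range e, ((m / p ^ i % p : ℕ) : ℤ) * u i * (p : ℤ) ^ (e - 1 - i))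
              - ∑ i ∈ range e, ((m' / p ^ i % p : ℕ) : ℤ) * u i * (p : ℤ) ^ (e - 1 - i)) →
    m = m' := by
  intro e
  induction e with
  | zero =>
    intro u _ m m' hm hm' _
    simp only [pow_zero, Nat.lt_one_iff] at hm hm'
    omega
  | succ e ih =>
    intro u hu m m' hm hm' hdvd
    have hp1 : 1 < p := hp.one_lt
    rw [Finset.sum_range_succ, Finset.sum_range_succ] at hdvd
    have hE : ∀ i, i < e → e + 1 - 1 - i = (e - 1 - i) + 1 := by omega
    have htop : e + 1 - 1 - e = 0 := by omega
    rw [htop] at hdvd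
    set dm : ℕ := m / p ^ e % p with hdm
    set dm' : ℕ := m' / p ^ e % p with hdm'
    have hrw : ∀ (x : ℕ),
        ∑ i ∈ range e, ((x / p ^ i % p : ℕ) : ℤ) * u i * (p : ℤ) ^ (e + 1 - 1 - i)
        = (p : ℤ) * ∑ i ∈ range e, ((x % p ^ e / p ^ i % p : ℕ) : ℤ) * u i * (p : ℤ) ^ (e - 1 - i) := by
      intro x
      rw [Finset.mul_sum]
      refine Finset.sum_congr rfl fun i hi => ?_
      rw [digit_mod_pow p i e x (Finset.mem_range.mp hi), hE i (Finset.mem_range.mp hi)]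
      ring
    rw [hrw m, hrw m'] at hdvd
    have hpd : (p : ℤ) ∣ ((dm : ℤ) - dm') * u e := by
      have h1 : (p : ℤ) ∣ (p : ℤ) ^ (e + 1) := dvd_pow_self _ (by omega)
      have h2 := dvd_trans h1 hdvd
      have h3 : (p : ℤ) ∣ (p : ℤ) * ∑ i ∈ range e, ((m % p ^ e / p ^ i % p : ℕ) : ℤ) * u i * (p : ℤ) ^ (e - 1 - i) := Dvd.intro _ rfl
      have h4 : (p : ℤ) ∣ (p : ℤ) * ∑ i ∈ range e, ((m' % p ^ e / p ^ i % p : ℕ) : ℤ) * u i * (p : ℤ) ^ (e - 1 - i) := Dvd.intro _ rfl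
      have heq : ((dm : ℤ) - dm') * u e = ((p : ℤ) * ∑ i ∈ range e, ((m % p ^ e / p ^ i % p : ℕ) : ℤ) * u i * (p : ℤ) ^ (e - 1 - i) + (dm : ℤ) * u e * (p:ℤ)^0 - ((p : ℤ) * ∑ i ∈ range e, ((m' % p ^ e / p ^ i % p : ℕ) : ℤ) * u i * (p : ℤ) ^ (e - 1 - i) + (dm' : ℤ) * u e * (p:ℤ)^0)) - ((p : ℤ) * ∑ i ∈ range e, ((m % p ^ e / p ^ i % p : ℕ) : ℤ) * u i * (p : ℤ) ^ (e - 1 - i)) + ((p : ℤ) * ∑ i ∈ range e, ((m' % p ^ e / p ^ i % p : ℕ) : ℤ) * u i * (p : ℤ) ^ (e - 1 - i)) := by ring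
      rw [heq]
      exact dvd_add (dvd_sub h2 h3) h4
    have hdtop : dm = dm' := by
      have hcop : IsCoprime ((p : ℤ)) (u e) := (hu e (by omega)).symm
      have hnd : ¬ (p : ℤ) ∣ u e := fun hd =>
        (Nat.prime_iff_prime_int.mp hp).not_unit (hcop.isUnit_of_dvd' dvd_rfl hd)
      have hdd : (p : ℤ) ∣ ((dm : ℤ) - dm') := by
        rcases ((Nat.prime_iff_prime_int.mp hp).dvd_mul.mp hpd) with h | h
        · exact h
        · exact absurd h hnd
      have hz : ((dm : ℤ) - dm') = 0 := by
        apply Int.eq_zero_of_abs_lt_dvd hdd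
        have h1 : dm < p := Nat.mod_lt _ (by omega)
        have h2 : dm' < p := Nat.mod_lt _ (by omega)
        rw [abs_sub_lt_iff]
        constructor <;> push_cast <;> omega
      omega
    have hlow : m % p ^ e = m' % p ^ e := by
      apply ih u (fun i hi => hu i (by omega)) _ _ (Nat.mod_lt _ (pow_pos hp.pos e)) (Nat.mod_lt _ (pow_pos hp.pos e))
      rw [hdtop] at hdvd
      have hh : (p:ℤ) * (p:ℤ)^e ∣ (p : ℤ) * ((∑ i ∈ range e, ((m % p ^ e / p ^ i % p : ℕ) : ℤ) * u i * (p : ℤ) ^ (e - 1 - i)) - ∑ i ∈ range e, ((m' % p ^ e / p ^ i % p : ℕ) : ℤ) * u i * (p : ℤ) ^ (e - 1 - i)) := by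
        have : (p : ℤ) ^ (e + 1) = (p:ℤ) * (p:ℤ)^e := by ring
        rw [← this]
        convert hdvd using 1
        ring
      exact (mul_dvd_mul_iff_left (by exact_mod_cast hp.ne_zero : (p:ℤ) ≠ 0)).mp hh
    have h1 : m / p ^ e < p := by
      rw [Nat.div_lt_iff_lt_mul (pow_pos hp.pos e)]
      calc m < p ^ (e+1) := hm
        _ = p * p ^ e := by ring
    have h2 : m' / p ^ e < p := by
      rw [Nat.div_lt_iff_lt_mul (pow_pos hp.pos e)]
      calc m' < p ^ (e+1) := hm'
        _ = p * p ^ e := by ring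
    have e1 : dm = m / p ^ e := by rw [hdm, Nat.mod_eq_of_lt h1]
    have e2 : dm' = m' / p ^ e := by rw [hdm', Nat.mod_eq_of_lt h2]
    have hdiv : m / p ^ e = m' / p ^ e := by omega
    calc m = p ^ e * (m / p ^ e) + m % p ^ e := (Nat.div_add_mod m (p ^ e)).symm
      _ = p ^ e * (m' / p ^ e) + m' % p ^ e := by rw [hdiv, hlow]
      _ = m' := Nat.div_add_mod m' (p ^ e)

lemma fiber_one (p e : ℕ) (hp : p.Prime) (u : ℕ → ℤ)
    (hu : ∀ i, i < e → IsCoprime (u i) (p : ℤ)) (c : ZMod (p ^ e)) :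
    ((range (p ^ e)).filter (fun h =>
      ((∑ i ∈ range e, ((h / p ^ i % p : ℕ) : ℤ) * u i * (p : ℤ) ^ (e - 1 - i) : ℤ)
        : ZMod (p ^ e)) = c)).card = 1 := by
  haveI : NeZero (p ^ e) := ⟨pow_ne_zero e hp.ne_zero⟩
  set F : ℕ → ZMod (p ^ e) := fun h =>
    ((∑ i ∈ range e, ((h / p ^ i % p : ℕ) : ℤ) * u i * (p : ℤ) ^ (e - 1 - i) : ℤ)
      : ZMod (p ^ e)) with hF
  have hinj : Set.InjOn F (range (p ^ e)) := by
    intro a ha b hb hab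
    simp only [Finset.coe_range, Set.mem_Iio] at ha hb
    refine key p hp e u hu a b ha hb ?_
    have := (ZMod.intCast_eq_intCast_iff' _ _ _).mp hab
    have hdvd := Int.ModEq.dvd this
    have : ((p ^ e : ℕ) : ℤ) = (p : ℤ) ^ e := by push_cast; ring
    rw [this] at hdvd
    exact (dvd_sub_comm).mp hdvd
  have hcard : ((range (p ^ e)).image F).card = p ^ e := by
    rw [Finset.card_image_of_injOn hinj, Finset.card_range]
  have huniv : (range (p ^ e)).image F = Finset.univ := by
    apply Finset.eq_univ_of_card
    rw [hcard, ZMod.card]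
  have hc : c ∈ (range (p ^ e)).image F := by rw [huniv]; exact Finset.mem_univ c
  obtain ⟨h₀, hh₀, hFh₀⟩ := Finset.mem_image.mp hc
  rw [Finset.card_eq_one]
  refine ⟨h₀, ?_⟩
  ext x
  simp only [Finset.mem_filter, Finset.mem_singleton]
  constructor
  · rintro ⟨hx, hfx⟩
    exact hinj (by simpa using hx) (by simpa using hh₀) (hfx.trans hFh₀.symm)
  · rintro rfl
    exact ⟨hh₀, hFh₀⟩

/-- As `k` ranges over `0, ..., p^n - 1` with `p`-adic digits `a_j^(k)`, the integers
`Σ_{j=1}^n a_j^(k) Φ_j p^(n-j)` run through a complete residue system modulo `p^e`,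
each residue occurring exactly `p^(n-e)` times, provided `Φ_j = 0` for `j ≤ n - e` and
`gcd(Φ_j, p) = 1` for `n - e < j ≤ n`. -/
theorem digit_sums_complete_residue_system
    (p n e : ℕ) (hp : p.Prime) (hn : 1 ≤ n) (he : 1 ≤ e) (hen : e ≤ n)
    (Φ : ℕ → ℤ)
    (hΦ0 : ∀ j, j ≤ n - e → Φ j = 0)
    (hΦcop : ∀ j, n - e < j → j ≤ n → IsCoprime (Φ j) (p : ℤ)) :
    ∀ c : ZMod (p ^ e),
      ((Finset.range (p ^ n)).filter (fun k =>
        ((∑ j ∈ Finset.Icc 1 n, (((k / p ^ (j - 1)) % p : ℕ) : ℤ) * Φ j * (p : ℤ) ^ (n - j)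
          : ℤ) : ZMod (p ^ e)) = c)).card = p ^ (n - e) := by
  intro c
  set u : ℕ → ℤ := fun i => Φ (n - e + 1 + i) with hu_def
  have hu : ∀ i, i < e → IsCoprime (u i) (p : ℤ) := fun i hi =>
    hΦcop _ (by omega) (by omega)
  have hsum : ∀ k : ℕ,
      (∑ j ∈ Finset.Icc 1 n, (((k / p ^ (j - 1)) % p : ℕ) : ℤ) * Φ j * (p : ℤ) ^ (n - j))
      = ∑ i ∈ range e, (((k / p ^ (n - e)) / p ^ i % p : ℕ) : ℤ) * u i * (p : ℤ) ^ (e - 1 - i) := by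
    intro k
    have hsub : Finset.Icc (n - e + 1) n ⊆ Finset.Icc 1 n := by
      apply Finset.Icc_subset_Icc <;> omega
    rw [← Finset.sum_subset hsub (fun j hj hj' => by
      have : Φ j = 0 := hΦ0 j (by
        simp only [Finset.mem_Icc] at hj hj'
        omega)
      simp [this])]
    rw [show Finset.Icc (n - e + 1) n = Finset.Ico (n - e + 1) (n + 1) by
      rw [Finset.Ico_add_one_right_eq_Icc]]
    rw [Finset.sum_Ico_eq_sum_range]
    have hcnt : n + 1 - (n - e + 1) = e := by omega
    rw [hcnt]
    refine Finset.sum_congr rfl fun i hi => ?_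
    have hi' : i < e := Finset.mem_range.mp hi
    have h1 : n - e + 1 + i - 1 = n - e + i := by omega
    have h2 : n - (n - e + 1 + i) = e - 1 - i := by omega
    have h3 : k / p ^ (n - e + i) = k / p ^ (n - e) / p ^ i := by
      rw [Nat.div_div_eq_div_mul, ← pow_add]
    rw [h1, h2, h3, hu_def]
  have hpn : p ^ n = p ^ (n - e) * p ^ e := by
    rw [← pow_add]; congr 1; omega
  have hQ := fiber_one p e hp u hu c
  have hfeq : (Finset.range (p ^ n)).filter (fun k =>
        ((∑ j ∈ Finset.Icc 1 n, (((k / p ^ (j - 1)) % p : ℕ) : ℤ) * Φ j * (p : ℤ) ^ (n - j)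
          : ℤ) : ZMod (p ^ e)) = c)
      = (Finset.range (p ^ n)).filter (fun k =>
        ((∑ i ∈ range e, (((k / p ^ (n - e)) / p ^ i % p : ℕ) : ℤ) * u i * (p : ℤ) ^ (e - 1 - i)
          : ℤ) : ZMod (p ^ e)) = c) := by
    apply Finset.filter_congr
    intro k _
    rw [hsum k]
  rw [hfeq]
  have hbij : ((Finset.range (p ^ n)).filter (fun k =>
        ((∑ i ∈ range e, (((k / p ^ (n - e)) / p ^ i % p : ℕ) : ℤ) * u i * (p : ℤ) ^ (e - 1 - i)
          : ℤ) : ZMod (p ^ e)) = c)).card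
      = ((Finset.range (p ^ (n - e))) ×ˢ ((Finset.range (p ^ e)).filter (fun h =>
        ((∑ i ∈ range e, ((h / p ^ i % p : ℕ) : ℤ) * u i * (p : ℤ) ^ (e - 1 - i)
          : ℤ) : ZMod (p ^ e)) = c))).card := by
    apply Finset.card_nbij' (fun k => (k % p ^ (n - e), k / p ^ (n - e)))
      (fun x => x.2 * p ^ (n - e) + x.1)
    · intro k hk
      simp only [Finset.mem_coe, Finset.mem_filter, Finset.mem_range, Finset.mem_product] at hk ⊢
      refine ⟨Nat.mod_lt _ (pow_pos hp.pos _), ?_, hk.2⟩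
      rw [hpn] at hk
      exact Nat.div_lt_of_lt_mul hk.1
    · intro x hx
      simp only [Finset.mem_coe, Finset.mem_filter, Finset.mem_range, Finset.mem_product] at hx ⊢
      have hd : (x.2 * p ^ (n - e) + x.1) / p ^ (n - e) = x.2 := by
        rw [add_comm, Nat.add_mul_div_right _ _ (pow_pos hp.pos _), Nat.div_eq_of_lt hx.1,
          Nat.zero_add]
      constructor
      · rw [hpn]
        calc x.2 * p ^ (n - e) + x.1 < x.2 * p ^ (n - e) + p ^ (n - e) := by omega
          _ = (x.2 + 1) * p ^ (n - e) := by ring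
          _ ≤ p ^ e * p ^ (n - e) := by
              apply Nat.mul_le_mul_right
              omega
          _ = p ^ (n - e) * p ^ e := by ring
      · rw [hd]
        exact hx.2.2
    · intro k hk
      exact Nat.div_add_mod' k (p ^ (n - e))
    · intro x hx
      simp only [Finset.mem_coe, Finset.mem_product, Finset.mem_range, Finset.mem_filter] at hx
      have h1 : (x.2 * p ^ (n - e) + x.1) % p ^ (n - e) = x.1 := by
        rw [add_comm, Nat.add_mul_mod_self_right, Nat.mod_eq_of_lt hx.1]
      have h2 : (x.2 * p ^ (n - e) + x.1) / p ^ (n - e) = x.2 := by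
        rw [add_comm, Nat.add_mul_div_right _ _ (pow_pos hp.pos _), Nat.div_eq_of_lt hx.1,
          Nat.zero_add]
      show ((x.2 * p ^ (n - e) + x.1) % p ^ (n - e), (x.2 * p ^ (n - e) + x.1) / p ^ (n - e)) = x
      rw [h1, h2]
  rw [hbij, Finset.card_product, Finset.card_range, hQ, mul_one]
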